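/- Let A and B be nonempty closed convex subsets of X, set T := P_B ∘ P_A, and suppose T has no fixed point. Suppose that (rec A) ∩ (rec B) is a ray. Then for every x ∈ X the sequence (Tⁿx/‖Tⁿx‖) (eventually well defined) converges. -/

import Mathlib

open Filter Topology
open scoped RealInnerProductSpace

set_option linter.unusedSectionVars false
set_option maxHeartbeats 1000000

variable {X : Type*} [NormedAddCommGroup X] [InnerProductSpace ℝ X] [FiniteDimensional ℝ X]

/-- `P` is the projector onto the set `C`: `P x` is a point of `C` nearest to `x`. -/
def IsProjector (C : Set X) (P : X → X) : Prop :=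
  ∀ x : X, P x ∈ C ∧ ∀ y ∈ C, ‖x - P x‖ ≤ ‖x - y‖

/-- The recession cone `rec S = {x : x + S ⊆ S}` of a set `S`. -/
def recCone (S : Set X) : Set X := {x : X | ∀ s ∈ S, x + s ∈ S}

/-- A ray: the set of nonnegative multiples of some nonzero direction `d`. -/
def IsRay (S : Set X) : Prop := ∃ d : X, d ≠ 0 ∧ S = {y : X | ∃ t : ℝ, 0 ≤ t ∧ y = t • d}

lemma isProjector_inner_le {C : Set X} (hC : Convex ℝ C) {P : X → X}
    (hP : IsProjector C P) (x : X) {y : X} (hy : y ∈ C) :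
    ⟪x - P x, y - P x⟫ ≤ 0 := by
  haveI : Nonempty C := ⟨⟨y, hy⟩⟩
  obtain ⟨hmem, hmin⟩ := hP x
  have hinf : ‖x - P x‖ = ⨅ w : C, ‖x - w‖ := by
    refine le_antisymm (le_ciInf fun w => hmin w w.2) ?_
    exact ciInf_le ⟨0, by rintro r ⟨w, rfl⟩; positivity⟩ (⟨P x, hmem⟩ : C)
  exact (norm_eq_iInf_iff_real_inner_le_zero hC hmem).mp hinf y hy

lemma isProjector_nonexpansive {C : Set X} (hC : Convex ℝ C) {P : X → X}
    (hP : IsProjector C P) (x y : X) : ‖P x - P y‖ ≤ ‖x - y‖ := by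
  have h1 := isProjector_inner_le hC hP x (hP y).1
  have h2 := isProjector_inner_le hC hP y (hP x).1
  have h1' : 0 ≤ ⟪x - P x, P x - P y⟫ := by
    rw [show (P x - P y : X) = -(P y - P x) by abel, inner_neg_right]; linarith
  have h2' : 0 ≤ ⟪P y - y, P x - P y⟫ := by
    rw [show (P y - y : X) = -(y - P y) by abel, inner_neg_left]; linarith
  have key : ‖P x - P y‖ ^ 2 ≤ ⟪x - y, P x - P y⟫ := by
    have e : (x - y : X) = (x - P x) + (P x - P y) + (P y - y) := by abel
    rw [e, inner_add_left, inner_add_left, real_inner_self_eq_norm_sq]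
    linarith
  have hcs := real_inner_le_norm (x - y) (P x - P y)
  by_contra hlt
  push_neg at hlt
  nlinarith [norm_nonneg (P x - P y), norm_nonneg (x - y)]

lemma mem_recCone_of_tendsto {S : Set X} (hScl : IsClosed S) (hSconv : Convex ℝ S)
    (s : ℕ → X) (hs : ∀ᶠ n in atTop, s n ∈ S)
    (hnorm : Tendsto (fun n => ‖s n‖) atTop atTop) {w : X}
    (hw : Tendsto (fun n => ‖s n‖⁻¹ • s n) atTop (𝓝 w)) : w ∈ recCone S := by
  intro s₀ hs₀
  have h1 : ∀ᶠ n in atTop, (1:ℝ) ≤ ‖s n‖ := hnorm.eventually_ge_atTop 1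
  have hlam : Tendsto (fun n => ‖s n‖⁻¹) atTop (𝓝 0) := hnorm.inv_tendsto_atTop
  have hconv : Tendsto (fun n => (1 - ‖s n‖⁻¹) • s₀ + ‖s n‖⁻¹ • s n) atTop (𝓝 (w + s₀)) := by
    have hc : Tendsto (fun n => (1 - ‖s n‖⁻¹) • s₀) atTop (𝓝 ((1 - (0:ℝ)) • s₀)) :=
      (tendsto_const_nhds.sub hlam).smul_const s₀
    have := hc.add hw
    simpa [add_comm] using this
  refine hScl.mem_of_tendsto hconv ?_
  filter_upwards [h1, hs] with n hn hnS
  have h0 : (0:ℝ) ≤ ‖s n‖⁻¹ := by positivity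
  have h1' : ‖s n‖⁻¹ ≤ 1 := inv_le_one_of_one_le₀ hn
  exact hSconv hs₀ hnS (by linarith) h0 (by ring)

lemma normalized_sub_tendsto (a b : ℕ → X) (C : ℝ)
    (hd : ∀ n, ‖a n - b n‖ ≤ C)
    (hb : Tendsto (fun n => ‖b n‖) atTop atTop) :
    Tendsto (fun n => ‖a n‖⁻¹ • a n - ‖b n‖⁻¹ • b n) atTop (𝓝 0) := by
  have hC0 : 0 ≤ C := le_trans (norm_nonneg _) (hd 0)
  have h1 : Tendsto (fun n => ‖b n‖ - C) atTop atTop :=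
    (tendsto_atTop_add_const_right _ (-C) hb).congr (fun n => by ring)
  have hg : Tendsto (fun n => 2 * C / (‖b n‖ - C)) atTop (𝓝 0) := by
    have := tendsto_const_nhds (x := (2*C : ℝ)) |>.mul h1.inv_tendsto_atTop
    simpa [div_eq_mul_inv] using this
  apply squeeze_zero_norm' ?_ hg
  filter_upwards [hb.eventually_ge_atTop (C + 1)] with n hn
  have h2 : ‖b n - a n‖ ≤ C := by rw [norm_sub_rev]; exact hd n
  have hA : ‖b n‖ - C ≤ ‖a n‖ := by
    have := norm_sub_norm_le (b n) (a n)
    linarith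
  have hApos : (0:ℝ) < ‖a n‖ := by linarith
  have hBpos : (0:ℝ) < ‖b n‖ := by linarith
  have hdecomp : ‖a n‖⁻¹ • a n - ‖b n‖⁻¹ • b n
      = ‖a n‖⁻¹ • (a n - b n) + (‖a n‖⁻¹ - ‖b n‖⁻¹) • b n := by
    rw [smul_sub, sub_smul]; abel
  rw [hdecomp]
  have t1 : ‖‖a n‖⁻¹ • (a n - b n)‖ ≤ ‖a n‖⁻¹ * C := by
    rw [norm_smul, norm_inv, norm_norm]
    exact mul_le_mul_of_nonneg_left (hd n) (by positivity)
  have t2 : ‖(‖a n‖⁻¹ - ‖b n‖⁻¹) • b n‖ ≤ ‖a n‖⁻¹ * C := by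
    rw [norm_smul, Real.norm_eq_abs]
    have e : ‖a n‖⁻¹ - ‖b n‖⁻¹ = (‖b n‖ - ‖a n‖) / (‖a n‖ * ‖b n‖) := by
      field_simp
    have habs : |‖b n‖ - ‖a n‖| ≤ C := le_trans (abs_norm_sub_norm_le (b n) (a n)) h2
    rw [mul_comm (‖a n‖) (‖b n‖)] at e
    rw [e, abs_div, abs_of_pos (by positivity : (0:ℝ) < ‖b n‖ * ‖a n‖)]
    rw [div_mul_eq_mul_div, mul_comm (|‖b n‖ - ‖a n‖|) (‖b n‖), mul_div_mul_left _ _ hBpos.ne']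
    rw [div_eq_mul_inv, mul_comm]
    exact mul_le_mul_of_nonneg_left habs (by positivity)
  calc ‖‖a n‖⁻¹ • (a n - b n) + (‖a n‖⁻¹ - ‖b n‖⁻¹) • b n‖
      ≤ ‖a n‖⁻¹ * C + ‖a n‖⁻¹ * C := le_trans (norm_add_le _ _) (add_le_add t1 t2)
    _ = 2 * C / ‖a n‖ := by field_simp; ring
    _ ≤ 2 * C / (‖b n‖ - C) := by
        gcongr
        · linarith

/-- For fixed-point free `T = P_B ∘ P_A`, if `(rec A) ∩ (rec B)` is
a ray then the normalized iterates `Tⁿx/‖Tⁿx‖` converge for every `x`. -/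
theorem stmt13 (A B : Set X) (hAne : A.Nonempty) (hAcl : IsClosed A) (hAconv : Convex ℝ A)
    (hBne : B.Nonempty) (hBcl : IsClosed B) (hBconv : Convex ℝ B)
    (PA PB : X → X) (hPA : IsProjector A PA) (hPB : IsProjector B PB)
    (T : X → X) (hT : T = PB ∘ PA) (hfix : ∀ x : X, T x ≠ x)
    (hray : IsRay (recCone A ∩ recCone B)) :
    ∀ x : X, ∃ q : X,
      Tendsto (fun n : ℕ => ‖T^[n] x‖⁻¹ • T^[n] x) atTop (nhds q) := by
  subst hT
  intro x
  obtain ⟨d, hd0, hdeq⟩ := hray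
  have hPAcont : Continuous PA := by
    refine (LipschitzWith.of_dist_le_mul (K := 1) fun u v => ?_).continuous
    simpa [dist_eq_norm] using isProjector_nonexpansive hAconv hPA u v
  have hPBcont : Continuous PB := by
    refine (LipschitzWith.of_dist_le_mul (K := 1) fun u v => ?_).continuous
    simpa [dist_eq_norm] using isProjector_nonexpansive hBconv hPB u v
  set b : ℕ → X := fun n => (PB ∘ PA)^[n] x with hbdef
  set a : ℕ → X := fun n => PA (b n) with hadef
  have hTb : ∀ n, b (n+1) = PB (a n) := by
    intro n
    simp only [hbdef, Function.iterate_succ_apply']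
    rfl
  have haA : ∀ n, a n ∈ A := fun n => (hPA (b n)).1
  have hbB : ∀ n, b (n+1) ∈ B := fun n => by rw [hTb n]; exact (hPB (a n)).1
  set dn : ℕ → ℝ := fun n => ‖b n - a n‖ with hdndef
  set en : ℕ → ℝ := fun n => ‖a n - b (n+1)‖ with hendef
  have h_le_en : ∀ k, dn (k+1) ≤ en k := by
    intro k
    calc dn (k+1) ≤ ‖b (k+1) - a k‖ := (hPA (b (k+1))).2 _ (haA k)
      _ = en k := norm_sub_rev _ _
  have h_en_le : ∀ k, en (k+1) ≤ dn (k+1) := by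
    intro k
    have : ‖a (k+1) - b (k+2)‖ ≤ ‖a (k+1) - b (k+1)‖ := by
      rw [hTb (k+1)]
      exact (hPB (a (k+1))).2 _ (hbB k)
    calc en (k+1) = ‖a (k+1) - b (k+2)‖ := rfl
      _ ≤ ‖a (k+1) - b (k+1)‖ := this
      _ = dn (k+1) := norm_sub_rev _ _
  have h_anti : ∀ k, dn (k+2) ≤ dn (k+1) := fun k =>
    le_trans (h_le_en (k+1)) (h_en_le k)
  have hf_anti : Antitone (fun k => dn (k+1)) := antitone_nat_of_succ_le h_anti
  obtain ⟨δ, hfδ⟩ : ∃ δ : ℝ, Tendsto (fun k => dn (k+1)) atTop (𝓝 δ) :=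
    ⟨_, tendsto_atTop_ciInf hf_anti ⟨0, by rintro r ⟨k, rfl⟩; positivity⟩⟩
  have hdnδ : Tendsto dn atTop (𝓝 δ) := (tendsto_add_atTop_iff_nat 1).mp hfδ
  have henδ : Tendsto en atTop (𝓝 δ) := by
    refine tendsto_of_tendsto_of_tendsto_of_le_of_le' hfδ hdnδ
      (Eventually.of_forall h_le_en) ?_
    filter_upwards [eventually_ge_atTop 1] with n hn
    cases n with
    | zero => exact absurd hn (by norm_num)
    | succ k => exact h_en_le k
  set C : ℝ := max (dn 0) (dn 1) with hCdef
  have hCb : ∀ n, dn n ≤ C := by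
    intro n
    cases n with
    | zero => exact le_max_left _ _
    | succ k => exact le_trans (hf_anti (Nat.zero_le k)) (le_max_right _ _)
  have hCab : ∀ n, ‖a n - b n‖ ≤ C := fun n => by
    rw [norm_sub_rev]; exact hCb n
  -- norms blow up
  have hbinf : Tendsto (fun n => ‖b n‖) atTop atTop := by
    by_contra hcon
    rw [tendsto_atTop] at hcon
    push_neg at hcon
    obtain ⟨M, hM⟩ := hcon
    have hM' : ∃ᶠ n in atTop, ‖b n‖ < M := hM
    obtain ⟨φ, hφmono, hφ⟩ := Filter.extraction_of_frequently_atTop hM'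
    have hball : ∀ k, b (φ k) ∈ Metric.closedBall (0:X) M := fun k => by
      simpa [Metric.mem_closedBall, dist_zero_right] using (hφ k).le
    obtain ⟨z, _, ψ, hψmono, hψ⟩ := (isCompact_closedBall (0:X) M).tendsto_subseq hball
    set m : ℕ → ℕ := φ ∘ ψ with hmdef
    have hmmono : StrictMono m := hφmono.comp hψmono
    have hmat : Tendsto m atTop atTop := hmmono.tendsto_atTop
    have hbz : Tendsto (fun k => b (m k)) atTop (𝓝 z) := hψ
    have haz : Tendsto (fun k => a (m k)) atTop (𝓝 (PA z)) := (hPAcont.tendsto z).comp hbz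
    have hbz' : Tendsto (fun k => b (m k + 1)) atTop (𝓝 (PB (PA z))) := by
      refine ((hPBcont.tendsto (PA z)).comp haz).congr fun k => ?_
      exact (hTb (m k)).symm
    have hza' : ‖z - PA z‖ = δ :=
      tendsto_nhds_unique ((hbz.sub haz).norm) (hdnδ.comp hmat) |>.symm |>.symm
    have ha'b' : ‖PA z - PB (PA z)‖ = δ :=
      tendsto_nhds_unique ((haz.sub hbz').norm) (henδ.comp hmat)
    have hzB : z ∈ B := by
      refine hBcl.mem_of_tendsto hbz ?_
      filter_upwards [hmat.eventually_ge_atTop 1] with k hk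
      obtain ⟨j, hj⟩ := Nat.exists_eq_succ_of_ne_zero (by omega : m k ≠ 0)
      rw [hj]; exact hbB j
    have hineq := isProjector_inner_le hBconv hPB (PA z) hzB
    have hexp : ‖z - PB (PA z)‖^2
        = ‖z - PA z‖^2 + 2*⟪z - PA z, PA z - PB (PA z)⟫ + ‖PA z - PB (PA z)‖^2 := by
      rw [show z - PB (PA z) = (z - PA z) + (PA z - PB (PA z)) by abel]
      exact norm_add_sq_real _ _
    have h2 : ⟪PA z - PB (PA z), z - PB (PA z)⟫
        = ⟪PA z - PB (PA z), z - PA z⟫ + ‖PA z - PB (PA z)‖^2 := by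
      rw [show z - PB (PA z) = (z - PA z) + (PA z - PB (PA z)) by abel, inner_add_right,
        real_inner_self_eq_norm_sq]
    have hsym : ⟪z - PA z, PA z - PB (PA z)⟫ = ⟪PA z - PB (PA z), z - PA z⟫ :=
      real_inner_comm _ _
    have hle : ‖z - PB (PA z)‖^2 ≤ 0 := by
      rw [ha'b'] at h2
      rw [hexp, hza', ha'b']
      linarith [hineq, hsym]
    have hz0 : z - PB (PA z) = 0 := by
      have hn0 : ‖z - PB (PA z)‖ ≤ 0 := by nlinarith [norm_nonneg (z - PB (PA z))]
      exact norm_le_zero_iff.mp hn0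
    exact hfix z (sub_eq_zero.mp hz0).symm
  have hainf : Tendsto (fun n => ‖a n‖) atTop atTop := by
    refine tendsto_atTop_mono' atTop ?_ (tendsto_atTop_add_const_right _ (-C) hbinf)
    filter_upwards with n
    have h2 := norm_sub_norm_le (b n) (a n)
    have h3 : ‖b n - a n‖ ≤ C := hCb n
    linarith
  have hdiff := normalized_sub_tendsto a b C hCab hbinf
  refine ⟨‖d‖⁻¹ • d, ?_⟩
  apply Filter.tendsto_of_subseq_tendsto
  intro ns hns
  have hmem : ∀ k, ‖b (ns k)‖⁻¹ • b (ns k) ∈ Metric.closedBall (0:X) 1 := by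
    intro k
    rcases eq_or_ne (b (ns k)) 0 with h|h
    · simp [h]
    · have hnz : ‖b (ns k)‖ ≠ 0 := norm_ne_zero_iff.mpr h
      simp [Metric.mem_closedBall, dist_zero_right, norm_smul, norm_inv, norm_norm,
        inv_mul_cancel₀ hnz]
  obtain ⟨w, _, ms, hmsmono, hwlim⟩ := (isCompact_closedBall (0:X) 1).tendsto_subseq hmem
  refine ⟨ms, ?_⟩
  set nn : ℕ → ℕ := fun k => ns (ms k) with hnndef
  have hnn : Tendsto nn atTop atTop := hns.comp hmsmono.tendsto_atTop
  have hbnn : Tendsto (fun k => ‖b (nn k)‖) atTop atTop := hbinf.comp hnn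
  have hwlim' : Tendsto (fun k => ‖b (nn k)‖⁻¹ • b (nn k)) atTop (𝓝 w) := hwlim
  have hwB : w ∈ recCone B := by
    refine mem_recCone_of_tendsto hBcl hBconv _ ?_ hbnn hwlim'
    filter_upwards [hnn.eventually_ge_atTop 1] with k hk
    obtain ⟨j, hj⟩ := Nat.exists_eq_succ_of_ne_zero (by omega : nn k ≠ 0)
    rw [hj]; exact hbB j
  have hanorm : Tendsto (fun k => ‖a (nn k)‖⁻¹ • a (nn k)) atTop (𝓝 w) := by
    have h := (hdiff.comp hnn).add hwlim'
    simp only [zero_add] at h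
    refine h.congr fun k => ?_
    simp only [Function.comp_apply]
    abel
  have hwA : w ∈ recCone A :=
    mem_recCone_of_tendsto hAcl hAconv _ (Eventually.of_forall fun k => haA (nn k))
      (hainf.comp hnn) hanorm
  have hwray : w ∈ {y : X | ∃ t : ℝ, 0 ≤ t ∧ y = t • d} := hdeq ▸ ⟨hwA, hwB⟩
  obtain ⟨t, ht, htw⟩ := hwray
  have hwnorm : ‖w‖ = 1 := by
    have h1 : Tendsto (fun k => ‖‖b (nn k)‖⁻¹ • b (nn k)‖) atTop (𝓝 ‖w‖) := hwlim'.norm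
    have h2 : ∀ᶠ k in atTop, ‖‖b (nn k)‖⁻¹ • b (nn k)‖ = (1:ℝ) := by
      filter_upwards [hbnn.eventually_ge_atTop 1] with k hk
      have hnz : ‖b (nn k)‖ ≠ 0 := by intro h0; rw [h0] at hk; norm_num at hk
      rw [norm_smul, norm_inv, norm_norm, inv_mul_cancel₀ hnz]
    exact tendsto_nhds_unique (Filter.Tendsto.congr' h2 h1) tendsto_const_nhds
  have hdn0 : ‖d‖ ≠ 0 := norm_ne_zero_iff.mpr hd0
  have htval : t = ‖d‖⁻¹ := by
    rw [htw, norm_smul, Real.norm_eq_abs, abs_of_nonneg ht] at hwnorm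
    field_simp
    linarith [hwnorm]
  rw [← htval, ← htw]
  exact hwlim
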